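/- For every real α > 0 with α ≠ 1, the function f_α : [0,1] → ℝ defined by f_α(x) = (1/(1−α)) · ln( a_+(x)^α + a_-(x)^α ), where a_±(x) = (1 ± √(1 − x))/2, is strictly monotonically increasing on [0,1]. Consequently f_α possesses an inverse function g_α = f_α^{-1} from [f_α(0), f_α(1)] = [0, ln 2] onto [0,1]. -/

import Mathlib

/-- The functional relation between the variance `x = ΔA²` of a qubit observable with
eigenvalues `±1` and its Rényi entropy of order `α`. -/
noncomputable def renyiOfVariance (α x : ℝ) : ℝ :=
  (1 / (1 - α)) *
    Real.log (((1 + Real.sqrt (1 - x)) / 2) ^ α + ((1 - Real.sqrt (1 - x)) / 2) ^ α)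

private noncomputable def psiAux (α t : ℝ) : ℝ :=
  ((1 + t) / 2) ^ α + ((1 - t) / 2) ^ α

private lemma psiAux_hasDerivAt (α : ℝ) {t : ℝ} (ht : t ∈ Set.Ioo (0:ℝ) 1) :
    HasDerivAt (psiAux α)
      (α * ((1 + t) / 2) ^ (α - 1) * (1/2) + α * ((1 - t) / 2) ^ (α - 1) * (-(1/2))) t := by
  obtain ⟨ht0, ht1⟩ := ht
  have h1 : HasDerivAt (fun t : ℝ => (1 + t) / 2) (1/2) t := by
    simpa using ((hasDerivAt_id t).const_add 1).div_const 2
  have h2 : HasDerivAt (fun t : ℝ => (1 - t) / 2) (-1/2) t := by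
    simpa using ((hasDerivAt_id t).const_sub 1).div_const 2
  have hb1 : (1 + t) / 2 ≠ 0 := by positivity
  have hb2 : (1 - t) / 2 ≠ 0 := by
    have : 0 < (1 - t) / 2 := by linarith
    exact this.ne'
  have h := (h1.rpow_const (p := α) (Or.inl hb1)).add (h2.rpow_const (p := α) (Or.inl hb2))
  unfold psiAux
  refine h.congr_deriv ?_
  ring

private lemma psiAux_continuousOn (α : ℝ) (hα : 0 < α) :
    ContinuousOn (psiAux α) (Set.Icc 0 1) := by
  apply ContinuousOn.add
  · exact (continuousOn_const.add continuousOn_id).div_const 2 |>.rpow_const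
      (fun x _ => Or.inr hα.le)
  · exact (continuousOn_const.sub continuousOn_id).div_const 2 |>.rpow_const
      (fun x _ => Or.inr hα.le)

private lemma psiAux_pos (α : ℝ) {t : ℝ} (ht : t ∈ Set.Icc (0:ℝ) 1) : 0 < psiAux α t := by
  have h1 : (0:ℝ) < (1 + t) / 2 := by have := ht.1; linarith
  have h2 : (0:ℝ) ≤ (1 - t) / 2 := by have := ht.2; linarith
  have := Real.rpow_pos_of_pos h1 α
  have := Real.rpow_nonneg h2 α
  unfold psiAux; linarith

private lemma psiAux_strictMonoOn (α : ℝ) (hα : 1 < α) :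
    StrictMonoOn (psiAux α) (Set.Icc 0 1) := by
  apply strictMonoOn_of_deriv_pos (convex_Icc 0 1) (psiAux_continuousOn α (by linarith))
  intro t ht
  rw [interior_Icc] at ht
  rw [(psiAux_hasDerivAt α ht).deriv]
  obtain ⟨ht0, ht1⟩ := ht
  have hlt : (1 - t) / 2 < (1 + t) / 2 := by linarith
  have h2 : (0:ℝ) < (1 - t) / 2 := by linarith
  have key : ((1 - t) / 2) ^ (α - 1) < ((1 + t) / 2) ^ (α - 1) :=
    Real.rpow_lt_rpow h2.le hlt (by linarith)
  have hαpos : (0:ℝ) < α := by linarith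
  nlinarith [key, hαpos]

private lemma psiAux_strictAntiOn (α : ℝ) (hα0 : 0 < α) (hα : α < 1) :
    StrictAntiOn (psiAux α) (Set.Icc 0 1) := by
  apply strictAntiOn_of_deriv_neg (convex_Icc 0 1) (psiAux_continuousOn α hα0)
  intro t ht
  rw [interior_Icc] at ht
  rw [(psiAux_hasDerivAt α ht).deriv]
  obtain ⟨ht0, ht1⟩ := ht
  have hlt : (1 - t) / 2 < (1 + t) / 2 := by linarith
  have h2 : (0:ℝ) < (1 - t) / 2 := by linarith
  have key : ((1 + t) / 2) ^ (α - 1) < ((1 - t) / 2) ^ (α - 1) :=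
    Real.rpow_lt_rpow_of_neg h2 hlt (by linarith)
  nlinarith [key, hα0]

private lemma renyi_eq (α x : ℝ) :
    renyiOfVariance α x = (1 / (1 - α)) * Real.log (psiAux α (Real.sqrt (1 - x))) := rfl

private lemma sqrt_mem (x : ℝ) (hx : x ∈ Set.Icc (0:ℝ) 1) :
    Real.sqrt (1 - x) ∈ Set.Icc (0:ℝ) 1 := by
  exact ⟨Real.sqrt_nonneg _, Real.sqrt_le_one.mpr (by linarith [hx.1])⟩

/-- For every `α > 0`, `α ≠ 1`, the function `f_α(x) = (1/(1−α)) ln(a₊(x)^α + a₋(x)^α)`,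
`a_±(x) = (1 ± √(1−x))/2`, is strictly increasing on `[0,1]`, with `f_α(0) = 0` and
`f_α(1) = ln 2`, hence it has an inverse `g_α` from `[0, ln 2]` onto `[0,1]`. -/
theorem renyiOfVariance_strictMonoOn_and_invertible
    (α : ℝ) (hα : 0 < α) (hα1 : α ≠ 1) :
    StrictMonoOn (renyiOfVariance α) (Set.Icc 0 1) ∧
    renyiOfVariance α 0 = 0 ∧ renyiOfVariance α 1 = Real.log 2 ∧
    ∃ g : ℝ → ℝ,
      Set.MapsTo g (Set.Icc 0 (Real.log 2)) (Set.Icc 0 1) ∧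
      Set.MapsTo (renyiOfVariance α) (Set.Icc 0 1) (Set.Icc 0 (Real.log 2)) ∧
      Set.InvOn g (renyiOfVariance α) (Set.Icc 0 1) (Set.Icc 0 (Real.log 2)) := by
  have h1α : (1:ℝ) - α ≠ 0 := sub_ne_zero.mpr (Ne.symm hα1)
  -- strict monotonicity
  have hmono : StrictMonoOn (renyiOfVariance α) (Set.Icc 0 1) := by
    intro x hx y hy hxy
    set s := Real.sqrt (1 - y) with hs
    set t := Real.sqrt (1 - x) with ht
    have hsmem := sqrt_mem y hy
    have htmem := sqrt_mem x hx
    have hst : s < t := by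
      apply Real.sqrt_lt_sqrt (by linarith [hy.2]) (by linarith)
    have hps := psiAux_pos α hsmem
    have hpt := psiAux_pos α htmem
    rw [renyi_eq, renyi_eq, ← hs, ← ht]
    rcases lt_or_gt_of_ne hα1 with hlt | hgt
    · -- α < 1 : ψ strictly anti, coefficient positive
      have hc : 0 < 1 / (1 - α) := div_pos one_pos (by linarith)
      have : psiAux α t < psiAux α s := psiAux_strictAntiOn α hα hlt hsmem htmem hst
      have := Real.log_lt_log hpt this
      nlinarith
    · -- α > 1 : ψ strictly mono, coefficient negative
      have hc : 1 / (1 - α) < 0 := by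
        apply div_neg_of_pos_of_neg one_pos; linarith
      have : psiAux α s < psiAux α t := psiAux_strictMonoOn α hgt hsmem htmem hst
      have := Real.log_lt_log hps this
      nlinarith
  -- values at endpoints
  have hf0 : renyiOfVariance α 0 = 0 := by
    simp [renyiOfVariance, Real.sqrt_one, Real.one_rpow, Real.zero_rpow hα.ne']
  have hf1 : renyiOfVariance α 1 = Real.log 2 := by
    have key : ((1:ℝ)/2) ^ α + ((1:ℝ)/2) ^ α = 2 ^ (1 - α) := by
      rw [one_div, Real.inv_rpow (by norm_num : (0:ℝ) ≤ 2),
        Real.rpow_sub (by norm_num : (0:ℝ) < 2), Real.rpow_one, div_eq_mul_inv]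
      ring
    have h1 : renyiOfVariance α 1 = (1 / (1 - α)) * Real.log (((1:ℝ)/2) ^ α + ((1:ℝ)/2) ^ α) := by
      unfold renyiOfVariance
      norm_num
    rw [h1, key, Real.log_rpow (by norm_num : (0:ℝ) < 2)]
    field_simp
  -- continuity
  have hcont : ContinuousOn (renyiOfVariance α) (Set.Icc 0 1) := by
    have hsq : ContinuousOn (fun x : ℝ => Real.sqrt (1 - x)) (Set.Icc 0 1) :=
      (Real.continuous_sqrt.comp (continuous_const.sub continuous_id)).continuousOn
    have hpsi : ContinuousOn (fun x : ℝ => psiAux α (Real.sqrt (1 - x))) (Set.Icc 0 1) :=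
      (psiAux_continuousOn α hα).comp hsq (fun x hx => sqrt_mem x hx)
    have : ContinuousOn (fun x : ℝ =>
        (1 / (1 - α)) * Real.log (psiAux α (Real.sqrt (1 - x)))) (Set.Icc 0 1) :=
      continuousOn_const.mul (hpsi.log (fun x hx => (psiAux_pos α (sqrt_mem x hx)).ne'))
    exact this
  -- image
  have himg : renyiOfVariance α '' Set.Icc 0 1 = Set.Icc 0 (Real.log 2) := by
    apply Set.Subset.antisymm
    · rintro _ ⟨x, hx, rfl⟩
      constructor
      · rw [← hf0]
        exact hmono.monotoneOn (Set.left_mem_Icc.mpr zero_le_one) hx hx.1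
      · rw [← hf1]
        exact hmono.monotoneOn hx (Set.right_mem_Icc.mpr zero_le_one) hx.2
    · have := intermediate_value_Icc (zero_le_one (α := ℝ)) hcont
      rwa [hf0, hf1] at this
  have hsurj : Set.SurjOn (renyiOfVariance α) (Set.Icc 0 1) (Set.Icc 0 (Real.log 2)) :=
    himg.symm.subset.trans (le_refl _)
  refine ⟨hmono, hf0, hf1, Function.invFunOn (renyiOfVariance α) (Set.Icc 0 1),
    hsurj.mapsTo_invFunOn, fun x hx => himg ▸ Set.mem_image_of_mem _ hx,
    hmono.injOn.leftInvOn_invFunOn, hsurj.rightInvOn_invFunOn⟩
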